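/- arXiv:1706.06084 — 5 statements merged into one kernel-verified Lean document; each statement's English description precedes it below -/
import Mathlib

section
/- Let Q be a k×n integer matrix of rank k, let d be an integer vector of length k, let I be a set of k linearly independent columns of Q, and let β be an integer vector of length n (an assignment to the n variables) such that Q β = d. Then for every column index v ∈ I, the entry of β at position v satisfies |β(v)| ≤ k! · (c_d + c_Q · Σ_{u ∉ I} |β(u)|) · c_Q^{k−1}, where c_Q and c_d are the maximum absolute values of entries of Q and d respectively, and the sum ranges over all column indices not in I. -/
open Matrix Finset

lemma adj_row_sum_bound {k : ℕ} (M : Matrix (Fin k) (Fin k) ℤ) (cQ : ℤ)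
    (hcQ : ∀ i j, |M i j| ≤ cQ) (hcQ0 : 0 ≤ cQ) (v : Fin k) :
    ∑ i, |M.adjugate v i| ≤ (Nat.factorial k : ℤ) * cQ ^ (k - 1) := by
  have key : ∀ i : Fin k, |M.adjugate v i| ≤
      ∑ σ : Equiv.Perm (Fin k), (if σ v = i then cQ ^ (k-1) else 0) := by
    intro i
    rw [Matrix.adjugate_apply, Matrix.det_apply]
    refine (Finset.abs_sum_le_sum_abs _ _).trans (Finset.sum_le_sum ?_)
    intro σ _
    have h1 : |Equiv.Perm.sign σ • ∏ c : Fin k, M.updateRow i (Pi.single v 1) (σ c) c|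
        = |∏ c : Fin k, M.updateRow i (Pi.single v 1) (σ c) c| := by
      rcases Int.units_eq_one_or (Equiv.Perm.sign σ) with h | h <;> simp [h]
    rw [h1, abs_prod]
    by_cases hσ : σ v = i
    · simp only [hσ, if_true]
      -- the factor at v is 1, the rest bounded by cQ
      rw [← Finset.prod_erase_mul _ _ (Finset.mem_univ v)]
      have hv1 : M.updateRow i (Pi.single v 1) (σ v) v = 1 := by
        rw [hσ, Matrix.updateRow_self, Pi.single_eq_same]
      rw [hv1, abs_one, mul_one]
      calc ∏ c ∈ Finset.univ.erase v, |M.updateRow i (Pi.single v 1) (σ c) c|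
          ≤ ∏ c ∈ Finset.univ.erase v, cQ := by
            refine Finset.prod_le_prod (fun c _ => abs_nonneg _) ?_
            intro c hc
            have hne : σ c ≠ i := by
              rw [← hσ]; exact fun h => (Finset.mem_erase.mp hc).1 (σ.injective h)
            rw [Matrix.updateRow_ne hne]
            exact hcQ _ _
        _ = cQ ^ (k - 1) := by
            rw [Finset.prod_const, Finset.card_erase_of_mem (Finset.mem_univ v),
              Finset.card_univ, Fintype.card_fin]
    · simp only [hσ, if_false]
      have h0 : |M.updateRow i (Pi.single v 1) (σ (σ.symm i)) (σ.symm i)| = 0 := by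
        rw [Equiv.apply_symm_apply, Matrix.updateRow_self, Pi.single_eq_of_ne, abs_zero]
        intro h
        exact hσ (by rw [show v = σ.symm i from h.symm, Equiv.apply_symm_apply])
      exact le_of_eq (Finset.prod_eq_zero (Finset.mem_univ (σ.symm i)) h0)
  calc ∑ i, |M.adjugate v i|
      ≤ ∑ i, ∑ σ : Equiv.Perm (Fin k), (if σ v = i then cQ ^ (k-1) else 0) :=
        Finset.sum_le_sum fun i _ => key i
    _ = ∑ σ : Equiv.Perm (Fin k), ∑ i, (if σ v = i then cQ ^ (k-1) else 0) :=
        Finset.sum_comm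
    _ = ∑ σ : Equiv.Perm (Fin k), cQ ^ (k-1) := by
        refine Finset.sum_congr rfl fun σ _ => ?_
        simp
    _ = (Nat.factorial k : ℤ) * cQ ^ (k - 1) := by
        rw [Finset.sum_const, Finset.card_univ, Fintype.card_perm, Fintype.card_fin,
          nsmul_eq_mul]

/-- bound on the entries of an integral assignment at a set of `k` linearly
independent columns of a rank-`k` integer matrix `Q` satisfying `Q β = d`. -/
theorem stmt1 (k n : ℕ) (Q : Matrix (Fin k) (Fin n) ℤ) (d : Fin k → ℤ)
    (hrank : (Q.map (Int.cast : ℤ → ℚ)).rank = k)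
    (I : Finset (Fin n)) (hIcard : I.card = k)
    (hInd : LinearIndependent ℚ (fun j : I => fun i => ((Q i j.1 : ℤ) : ℚ)))
    (β : Fin n → ℤ) (hβ : Q.mulVec β = d)
    (cQ cd : ℤ) (hcQ : ∀ i j, |Q i j| ≤ cQ) (hcd : ∀ i, |d i| ≤ cd) :
    ∀ v ∈ I, |β v| ≤ (Nat.factorial k : ℤ) *
      (cd + cQ * ∑ u ∈ Iᶜ, |β u|) * cQ ^ (k - 1) := by
  intro v hv
  have hk : 0 < k := hIcard ▸ Finset.card_pos.mpr ⟨v, hv⟩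
  have i0 : Fin k := ⟨0, hk⟩
  have hcQ0 : 0 ≤ cQ := le_trans (abs_nonneg _) (hcQ i0 v)
  set e : Fin k ≃ I := (Finset.equivFinOfCardEq hIcard).symm with he
  set M : Matrix (Fin k) (Fin k) ℤ := Matrix.of (fun i j => Q i (e j)) with hM
  set d' : Fin k → ℤ := fun i => d i - ∑ u ∈ Iᶜ, Q i u * β u with hd'
  set x : Fin k → ℤ := fun j => β (e j) with hx
  -- M x = d'
  have hMx : M.mulVec x = d' := by
    funext i
    have hsplit : (∑ u ∈ I, Q i u * β u) + ∑ u ∈ Iᶜ, Q i u * β u = d i := by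
      rw [Finset.sum_add_sum_compl]
      exact congrFun hβ i
    have hre : ∑ j : Fin k, Q i (e j) * β (e j) = ∑ u ∈ I, Q i u * β u := by
      rw [← Finset.sum_coe_sort I (fun u => Q i u * β u)]
      exact Equiv.sum_comp e (fun u : I => Q i u * β u)
    simp only [Matrix.mulVec, dotProduct, hd', hM, hx, Matrix.of_apply]
    rw [hre]; omega
  -- det M ≠ 0
  have hdet : M.det ≠ 0 := by
    intro h0
    obtain ⟨y, hy0, hy⟩ := (Matrix.exists_mulVec_eq_zero_iff).mpr h0
    have hInd' : LinearIndependent ℚ (fun j : Fin k => fun i => ((M i j : ℤ) : ℚ)) := by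
      have := hInd.comp e e.injective
      exact this
    have := Fintype.linearIndependent_iff.mp hInd' (fun j => (y j : ℚ)) ?_
    · apply hy0
      funext j
      exact_mod_cast this j
    · funext i
      have h2 := congrFun hy i
      simp only [Matrix.mulVec, dotProduct, Pi.zero_apply] at h2
      simp only [Finset.sum_apply, Pi.smul_apply, smul_eq_mul, Pi.zero_apply]
      have h3 : ((∑ j, M i j * y j : ℤ) : ℚ) = 0 := by exact_mod_cast h2
      push_cast at h3
      rw [← h3]
      exact Finset.sum_congr rfl fun j _ => mul_comm _ _
  have hdet1 : 1 ≤ |M.det| := Int.one_le_abs hdet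
  have hid : M.det • x = (M.adjugate).mulVec d' := by
    rw [← hMx, Matrix.mulVec_mulVec, Matrix.adjugate_mul, Matrix.smul_mulVec,
      Matrix.one_mulVec]
  set v' : Fin k := e.symm ⟨v, hv⟩ with hv'
  have hxv : x v' = β v := by simp [hx, hv']
  have habs : |M.det| * |β v| = |∑ i, M.adjugate v' i * d' i| := by
    rw [← abs_mul, ← hxv]
    congr 1
    have h4 := congrFun hid v'
    simpa [Matrix.mulVec, dotProduct, smul_eq_mul] using h4
  set D : ℤ := cd + cQ * ∑ u ∈ Iᶜ, |β u| with hDdef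
  have hD : ∀ i, |d' i| ≤ D := by
    intro i
    simp only [hd']
    calc |d i - ∑ u ∈ Iᶜ, Q i u * β u| ≤ |d i| + |∑ u ∈ Iᶜ, Q i u * β u| :=
          abs_sub _ _
      _ ≤ cd + ∑ u ∈ Iᶜ, |Q i u * β u| :=
          add_le_add (hcd i) (Finset.abs_sum_le_sum_abs _ _)
      _ ≤ cd + ∑ u ∈ Iᶜ, cQ * |β u| := by
          refine add_le_add le_rfl (Finset.sum_le_sum fun u _ => ?_)
          rw [abs_mul]
          exact mul_le_mul_of_nonneg_right (hcQ i u) (abs_nonneg _)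
      _ = D := by rw [hDdef, Finset.mul_sum]
  have hD0 : 0 ≤ D := le_trans (abs_nonneg (d' i0)) (hD i0)
  have hadj : ∑ i, |M.adjugate v' i| ≤ (Nat.factorial k : ℤ) * cQ ^ (k - 1) :=
    adj_row_sum_bound M cQ (fun i j => hcQ i (e j)) hcQ0 v'
  calc |β v| ≤ |M.det| * |β v| := le_mul_of_one_le_left (abs_nonneg _) hdet1
    _ = |∑ i, M.adjugate v' i * d' i| := habs
    _ ≤ ∑ i, |M.adjugate v' i * d' i| := Finset.abs_sum_le_sum_abs _ _
    _ ≤ ∑ i, |M.adjugate v' i| * D := by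
        refine Finset.sum_le_sum fun i _ => ?_
        rw [abs_mul]
        exact mul_le_mul_of_nonneg_left (hD i) (abs_nonneg _)
    _ = (∑ i, |M.adjugate v' i|) * D := (Finset.sum_mul _ _ _).symm
    _ ≤ ((Nat.factorial k : ℤ) * cQ ^ (k - 1)) * D := mul_le_mul_of_nonneg_right hadj hD0
    _ = (Nat.factorial k : ℤ) * D * cQ ^ (k - 1) := by ring
end

section
/- Let A be an m×n integer matrix and k a positive integer. Suppose there is a set Z of at most k rows of A such that every connected component of the incidence graph of A after deleting the vertices in Z has at most k vertices. Then for every set D of columns of A that is linearly dependent, there exists a subset D′ ⊆ D with |D′| ≤ k(k+1) that is linearly dependent. -/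
/-- The incidence graph of an integer matrix: a bipartite graph on rows and columns,
with row `i` adjacent to column `j` iff `A i j ≠ 0`. -/
def incGraph {M N : Type*} (A : Matrix M N ℤ) : SimpleGraph (M ⊕ N) :=
  SimpleGraph.fromRel fun x y => ∃ i j, x = Sum.inl i ∧ y = Sum.inr j ∧ A i j ≠ 0

/-- Every connected component of `G` after deleting the vertex set `Z` has at most
`k` vertices. -/
def SmallComponents {V : Type*} (G : SimpleGraph V) (Z : Set V) (k : ℕ) : Prop :=
  ∀ c : (G.induce Zᶜ).ConnectedComponent, c.supp.ncard ≤ k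

/-- A set `D` of columns of `A` is linearly dependent: there is a nonzero rational
vector supported on `D` that `A` maps to zero. -/
def ColsDependent {m n : ℕ} (A : Matrix (Fin m) (Fin n) ℤ) (D : Finset (Fin n)) : Prop :=
  ∃ x : Fin n → ℚ, x ≠ 0 ∧ (∀ j, x j ≠ 0 → j ∈ D) ∧
    (A.map (Int.cast : ℤ → ℚ)).mulVec x = 0

/-- if `A` has a constraint backdoor `Z` (a set of at most `k` rows whose
deletion from the incidence graph leaves components of size at most `k`), then every linearly
dependent set of columns contains a linearly dependent subset of size at most `k(k+1)`. -/
theorem stmt2 (m n k : ℕ) (hk : 0 < k) (A : Matrix (Fin m) (Fin n) ℤ)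
    (Z : Finset (Fin m)) (hZcard : Z.card ≤ k)
    (hZ : SmallComponents (incGraph A) (Sum.inl '' (Z : Set (Fin m))) k)
    (D : Finset (Fin n)) (hD : ColsDependent A D) :
    ∃ D' ⊆ D, D'.card ≤ k * (k + 1) ∧ ColsDependent A D' := by
  classical
  obtain ⟨x, hx0, hsupp, hAx⟩ := hD
  set M : Matrix (Fin m) (Fin n) ℚ := A.map (Int.cast : ℤ → ℚ) with hM
  set Zs : Set (Fin m ⊕ Fin n) := Sum.inl '' (Z : Set (Fin m)) with hZs
  set H := (incGraph A).induce Zsᶜ with hH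
  have hcolmem : ∀ j : Fin n, (Sum.inr j : Fin m ⊕ Fin n) ∈ Zsᶜ := by
    intro j; simp [hZs]
  have hrowmem : ∀ i : Fin m, i ∉ Z → (Sum.inl i : Fin m ⊕ Fin n) ∈ Zsᶜ := by
    intro i hi; simp [hZs, hi]
  set cv : Fin n → ↥Zsᶜ := fun j => ⟨Sum.inr j, hcolmem j⟩ with hcv
  have cvinj : Function.Injective cv := by
    intro a b h
    simpa [hcv, Subtype.ext_iff] using h
  set comp : Fin n → H.ConnectedComponent := fun j => H.connectedComponentMk (cv j) with hcomp
  -- rows and columns connected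
  have hrowcomp : ∀ (i : Fin m) (hi : i ∉ Z) (j : Fin n), A i j ≠ 0 →
      H.connectedComponentMk ⟨Sum.inl i, hrowmem i hi⟩ = comp j := by
    intro i hi j hij
    apply SimpleGraph.ConnectedComponent.sound
    apply SimpleGraph.Adj.reachable
    show H.Adj ⟨Sum.inl i, _⟩ (cv j)
    simp only [hH, SimpleGraph.comap_adj, Function.Embedding.coe_subtype]
    constructor
    · simp
    · left; exact ⟨i, j, rfl, rfl, hij⟩
  -- fiber bound
  set T : Finset (Fin n) := Finset.univ.filter (fun j => x j ≠ 0) with hT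
  have hTD : T ⊆ D := by
    intro j hj
    exact hsupp j (by simpa [hT] using hj)
  have hfiber : ∀ c : H.ConnectedComponent, (T.filter (fun j => comp j = c)).card ≤ k := by
    intro c
    set F := T.filter (fun j => comp j = c) with hF
    have himg : cv '' (F : Set (Fin n)) ⊆ c.supp := by
      rintro _ ⟨j, hj, rfl⟩
      have : comp j = c := (Finset.mem_filter.mp hj).2
      simpa [SimpleGraph.ConnectedComponent.mem_supp_iff] using this
    calc F.card = (cv '' (F : Set (Fin n))).ncard := by
          rw [Set.ncard_image_of_injective _ cvinj, Set.ncard_coe_finset]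
      _ ≤ c.supp.ncard := Set.ncard_le_ncard himg (Set.toFinite _)
      _ ≤ k := hZ c
  -- bound on union of fibers
  have hunion : ∀ S' : Finset H.ConnectedComponent,
      (T.filter (fun j => comp j ∈ S')).card ≤ S'.card * k := by
    intro S'
    rw [Finset.card_eq_sum_card_fiberwise
      (f := comp) (s := T.filter (fun j => comp j ∈ S')) (t := S') (fun j hj => (Finset.mem_filter.mp hj).2)]
    calc ∑ c ∈ S', ((T.filter (fun j => comp j ∈ S')).filter (fun j => comp j = c)).card
        ≤ ∑ c ∈ S', k := by
          apply Finset.sum_le_sum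
          intro c hc
          refine le_trans (Finset.card_le_card ?_) (hfiber c)
          intro j hj
          simp only [Finset.mem_filter] at hj ⊢
          exact ⟨hj.1.1, hj.2⟩
      _ = S'.card * k := by simp [mul_comm]
  -- the component-restricted vectors vanish on non-Z rows
  set v : H.ConnectedComponent → Fin n → ℚ :=
    fun c j => if comp j = c then x j else 0 with hv
  have hvanish : ∀ (c : H.ConnectedComponent) (i : Fin m), i ∉ Z →
      M.mulVec (v c) i = 0 := by
    intro c i hi
    have hAx0 : M.mulVec x i = 0 := congrFun hAx i
    rw [Matrix.mulVec, dotProduct] at hAx0 ⊢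
    set r := H.connectedComponentMk ⟨Sum.inl i, hrowmem i hi⟩ with hr
    by_cases hrc : r = c
    · rw [← hAx0]
      apply Finset.sum_congr rfl
      intro j _
      by_cases hij : A i j = 0
      · simp [hM, Matrix.map_apply, hij]
      · have : comp j = c := by rw [← hrowcomp i hi j hij]; exact hrc
        simp [hv, this]
    · apply Finset.sum_eq_zero
      intro j _
      by_cases hij : A i j = 0
      · simp [hM, Matrix.map_apply, hij]
      · have : comp j = r := (hrowcomp i hi j hij).symm
        simp [hv, this, hrc]
  set I : Finset H.ConnectedComponent := T.image comp with hI
  by_cases hcase : I.card ≤ k + 1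
  · -- few components: take T itself
    refine ⟨T, hTD, ?_, x, hx0, ?_, hAx⟩
    · have h1 : T.filter (fun j => comp j ∈ I) = T := by
        apply Finset.filter_true_of_mem
        intro j hj
        exact Finset.mem_image_of_mem comp hj
      have := hunion I
      rw [h1] at this
      calc T.card ≤ I.card * k := this
        _ ≤ (k + 1) * k := Nat.mul_le_mul_right k hcase
        _ = k * (k + 1) := Nat.mul_comm _ _
    · intro j hj
      simp [hT, hj]
  · -- many components: pick k+1 of them
    push_neg at hcase
    obtain ⟨S, hSI, hScard⟩ := Finset.exists_subset_card_eq (n := k + 1) (le_of_lt hcase)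
    set w : ↥S → (↥Z → ℚ) := fun c i => M.mulVec (v c.val) i.val with hw
    have hnli : ¬ LinearIndependent ℚ w := by
      intro h
      have h1 := h.fintype_card_le_finrank
      rw [Fintype.card_coe, hScard, Module.finrank_fintype_fun_eq_card, Fintype.card_coe] at h1
      omega
    obtain ⟨g, hg0, c0, hgc0⟩ := Fintype.not_linearIndependent_iff.mp hnli
    set y : Fin n → ℚ := fun j => ∑ c : ↥S, g c * v c.val j with hy
    have hyne : ∀ j, y j ≠ 0 → x j ≠ 0 ∧ comp j ∈ S := by
      intro j hyj
      obtain ⟨c, _, hc⟩ := Finset.exists_ne_zero_of_sum_ne_zero (by simpa [hy] using hyj)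
      have hvc : v c.val j ≠ 0 := fun h => hc (by simp [h])
      have h1 : comp j = c.val := by
        by_contra h
        exact hvc (by simp [hv, h])
      refine ⟨fun h => hvc (by simp [hv, h]), h1 ▸ c.property⟩
    refine ⟨T.filter (fun j => comp j ∈ S), fun j hj => hTD (Finset.filter_subset _ _ hj),
      ?_, y, ?_, ?_, ?_⟩
    · calc (T.filter (fun j => comp j ∈ S)).card ≤ S.card * k := hunion S
        _ = (k + 1) * k := by rw [hScard]
        _ = k * (k + 1) := Nat.mul_comm _ _
    · -- y ≠ 0
      have hc0I : (c0 : H.ConnectedComponent) ∈ I := hSI c0.property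
      obtain ⟨j, hjT, hjc⟩ := Finset.mem_image.mp hc0I
      have hxj : x j ≠ 0 := by simpa [hT] using hjT
      intro h
      have hyj : (∑ c : ↥S, g c * v c.val j) = 0 := congrFun h j
      rw [Fintype.sum_eq_single c0 (fun c hc => by
        have : comp j ≠ c.val := by
          rw [hjc]
          exact fun hcc => hc (Subtype.ext hcc.symm)
        simp [hv, this])] at hyj
      simp [hv, hjc] at hyj
      rcases hyj with h1 | h1
      · exact hgc0 h1
      · exact hxj h1
    · intro j hj
      obtain ⟨h1, h2⟩ := hyne j hj
      simp [hT, h1, h2]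
    · -- M.mulVec y = 0
      funext i
      have hswap : M.mulVec y i = ∑ c : ↥S, g c * M.mulVec (v c.val) i := by
        rw [Matrix.mulVec, dotProduct]
        simp only [hy, Finset.mul_sum]
        rw [Finset.sum_comm]
        apply Finset.sum_congr rfl
        intro c _
        rw [Matrix.mulVec, dotProduct, Finset.mul_sum]
        apply Finset.sum_congr rfl
        intro j _
        ring
      rw [hswap]
      by_cases hi : i ∈ Z
      · have := congrFun hg0 ⟨i, hi⟩
        simp only [Finset.sum_apply, Pi.smul_apply, smul_eq_mul, Pi.zero_apply] at this
        simpa [hw] using this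
      · simp only [Pi.zero_apply]
        apply Finset.sum_eq_zero
        intro c _
        rw [hvanish c.val i hi, mul_zero]
end

section
/- Let G be a finite graph with vertex set {1,…,n} and let p(i) denote the i-th prime number (p(1)=2). Then G is 3-colorable (its vertices can be colored with three colors so that no two adjacent vertices share a color) if and only if there exist positive integers c₁, c₂, c₃ such that: (1) for every vertex i ∈ {1,…,n}, exactly one of c₁, c₂, c₃ is divisible by p(i); and (2) for every edge {i,k} of G and every j ∈ {1,2,3}, it is not the case that both p(i) and p(k) divide c_j. -/
private lemma nth_prime_inj : Function.Injective (Nat.nth Nat.Prime) :=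
  Nat.nth_injective Nat.infinite_setOf_prime

private lemma dvd_prod_iff (n : ℕ) (s : Finset (Fin n)) (i : Fin n) :
    Nat.nth Nat.Prime i ∣ ∏ k ∈ s, Nat.nth Nat.Prime (k : ℕ) ↔ i ∈ s := by
  rw [(Nat.prime_nth_prime i).prime.dvd_finset_prod_iff]
  constructor
  · rintro ⟨k, hk, hdvd⟩
    rw [(Nat.prime_dvd_prime_iff_eq (Nat.prime_nth_prime _) (Nat.prime_nth_prime _)).mp hdvd
      |> nth_prime_inj |> fun h => show i = k from Fin.ext h]
    exact hk
  · intro h; exact ⟨i, h, dvd_rfl⟩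

/-- a graph on vertices `{0, …, n-1}` is 3-colorable iff there are positive
integers `c 0, c 1, c 2` such that for every vertex `i` exactly one of them is divisible by
the `i`-th prime, and for every edge `{i, k}` no `c j` is divisible by both the `i`-th and
the `k`-th prime.  (`Nat.nth Nat.Prime i` is the `i`-th prime, with `Nat.nth Nat.Prime 0 = 2`.) -/
theorem stmt9 (n : ℕ) (G : SimpleGraph (Fin n)) :
    G.Colorable 3 ↔
      ∃ c : Fin 3 → ℕ, (∀ j, 0 < c j) ∧
        (∀ i : Fin n, ∃! j : Fin 3, Nat.nth Nat.Prime i ∣ c j) ∧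
        (∀ i k : Fin n, G.Adj i k → ∀ j : Fin 3,
          ¬(Nat.nth Nat.Prime i ∣ c j ∧ Nat.nth Nat.Prime k ∣ c j)) := by
  constructor
  · rintro ⟨f⟩
    refine ⟨fun j => ∏ i ∈ Finset.univ.filter (fun i => f i = j),
        Nat.nth Nat.Prime (i : ℕ), ?_, ?_, ?_⟩
    · intro j
      exact Finset.prod_pos fun i _ => (Nat.prime_nth_prime _).pos
    · intro i
      refine ⟨f i, ?_, ?_⟩
      · show Nat.nth Nat.Prime i ∣ _
        rw [dvd_prod_iff]; simp
      · intro j hj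
        simp only at hj
        rw [dvd_prod_iff] at hj
        simpa using (Finset.mem_filter.mp hj).2.symm
    · intro i k hadj j ⟨hi, hk⟩
      rw [dvd_prod_iff] at hi hk
      have h1 := (Finset.mem_filter.mp hi).2
      have h2 := (Finset.mem_filter.mp hk).2
      exact f.valid hadj (h1.trans h2.symm)
  · rintro ⟨c, -, huniq, hedge⟩
    refine ⟨⟨fun i => (huniq i).choose, ?_⟩⟩
    intro i k hadj heq
    simp only at heq
    exact hedge i k hadj _ ⟨(huniq i).choose_spec.1, heq ▸ (huniq k).choose_spec.1⟩
end

section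
/- Let G be a k-partite graph with vertex partition V₁,…,V_k, and for 1 ≤ i < j ≤ k let E_{i,j} denote the set of edges with one endpoint in V_i and the other in V_j. Let S : V(G) → ℕ be an injective Sidon labeling, i.e., for all vertices a, b, u, v with {a,b} ≠ {u,v}, we have S(a)+S(b) ≠ S(u)+S(v). Then G contains a clique with exactly one vertex in each part V₁,…,V_k if and only if there exist vertices c_i ∈ V_i for each i and edges d_{i,j} ∈ E_{i,j} for each pair i < j such that for every i < j, S(c_i) + S(c_j) = S(u) + S(v), where u and v are the endpoints of d_{i,j}. -/
/-- in a `k`-partite graph `G` (partition given by `part`, with no edge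
inside a part) equipped with an injective Sidon labeling `S`, there is a multicolored clique
(one vertex per part, pairwise adjacent) iff one can select vertices `c i ∈ V_i` and, for
every pair of parts `i < j`, an edge between `V_i` and `V_j` whose endpoint labels sum to
`S (c i) + S (c j)`. -/
theorem stmt10 {V : Type*} (k : ℕ) (G : SimpleGraph V) (part : V → Fin k)
    (hpart : ∀ u v, G.Adj u v → part u ≠ part v)
    (S : V → ℕ) (hinj : Function.Injective S)
    (hSidon : ∀ a b u v : V, S a + S b = S u + S v → (a = u ∧ b = v) ∨ (a = v ∧ b = u)) :
    (∃ c : Fin k → V, (∀ i, part (c i) = i) ∧ ∀ i j, i ≠ j → G.Adj (c i) (c j)) ↔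
      (∃ c : Fin k → V, (∀ i, part (c i) = i) ∧
        ∀ i j : Fin k, i < j → ∃ u v : V, G.Adj u v ∧ part u = i ∧ part v = j ∧
          S (c i) + S (c j) = S u + S v) := by
  constructor
  · rintro ⟨c, hc, hadj⟩
    exact ⟨c, hc, fun i j hij => ⟨c i, c j, hadj i j hij.ne, hc i, hc j, rfl⟩⟩
  · rintro ⟨c, hc, h⟩
    refine ⟨c, hc, ?_⟩
    have key : ∀ i j : Fin k, i < j → G.Adj (c i) (c j) := by
      intro i j hij
      obtain ⟨u, v, huv, hu, hv, hsum⟩ := h i j hij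
      rcases hSidon _ _ _ _ hsum with ⟨h1, h2⟩ | ⟨h1, h2⟩
      · rw [h1, h2]; exact huv
      · exfalso
        have : part (c i) = j := h1 ▸ hv
        rw [hc i] at this
        exact hij.ne this
    intro i j hij
    rcases lt_or_gt_of_ne hij with h' | h'
    · exact key i j h'
    · exact (key j i h').symm
end

section
/- For every positive integer n there exists a strictly increasing sequence s₁ < s₂ < … < s_n of natural numbers with s_n ≤ 8n² that forms a Sidon sequence: whenever s_i + s_j = s_k + s_l with i ≤ j and k ≤ l, it holds that i = k and j = l. -/
lemma div_mod_unique' {a q r q' r' : ℕ} (ha : 0 < a) (hr : r < a) (hr' : r' < a)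
    (h : a * q + r = a * q' + r') : q = q' ∧ r = r' := by
  have h1 : (a * q + r) / a = q := by
    rw [Nat.mul_add_div ha, Nat.div_eq_of_lt hr, add_zero]
  have h2 : (a * q' + r') / a = q' := by
    rw [Nat.mul_add_div ha, Nat.div_eq_of_lt hr', add_zero]
  have hq : q = q' := by rw [← h1, h, h2]
  subst hq
  exact ⟨rfl, by omega⟩

/-- for every `n > 0` there is a strictly increasing Sidon sequence
`s 0 < s 1 < … < s (n-1)` of naturals with all elements at most `8 n²`: whenever
`s i + s j = s k + s l` with `i ≤ j` and `k ≤ l`, we have `i = k` and `j = l`. -/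
theorem stmt11 (n : ℕ) (hn : 0 < n) :
    ∃ s : Fin n → ℕ, StrictMono s ∧ (∀ i, s i ≤ 8 * n ^ 2) ∧
      ∀ i j k l : Fin n, i ≤ j → k ≤ l → s i + s j = s k + s l → i = k ∧ j = l := by
  obtain ⟨p, hp, hmp, hp2m⟩ := Nat.exists_prime_lt_and_le_two_mul (max n 2) (by omega)
  haveI : Fact p.Prime := ⟨hp⟩
  have hnp : n < p := lt_of_le_of_lt (le_max_left n 2) hmp
  have hp2 : 2 < p := lt_of_le_of_lt (le_max_right n 2) hmp
  have hp4n : p ≤ 4 * n := by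
    have : max n 2 ≤ n + 1 := by omega
    omega
  have hppos : 0 < p := hp.pos
  refine ⟨fun i => 2 * p * i.val + i.val ^ 2 % p, ?_, ?_, ?_⟩
  · intro i j hij
    have h1 : i.val ^ 2 % p < p := Nat.mod_lt _ hppos
    have h2 : i.val + 1 ≤ j.val := hij
    have h3 := Nat.mul_le_mul_left (2 * p) h2
    have h4 : 2 * p * (i.val + 1) = 2 * p * i.val + 2 * p := by ring
    simp only []
    have : 2 * p * i.val + i.val ^ 2 % p < 2 * p * j.val := by omega
    omega
  · intro i
    have h1 : i.val ^ 2 % p < p := Nat.mod_lt _ hppos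
    have h2 : i.val + 1 ≤ n := i.isLt
    have h3 : p * (2 * i.val + 1) ≤ (4 * n) * (2 * n - 1) := Nat.mul_le_mul hp4n (by omega)
    have h4 : (4 * n) * (2 * n - 1) ≤ 8 * n ^ 2 := by
      have : 2 * n - 1 ≤ 2 * n := by omega
      nlinarith
    nlinarith
  · intro i j k l hij hkl heq
    simp only [] at heq
    have hri : i.val ^ 2 % p < p := Nat.mod_lt _ hppos
    have hrj : j.val ^ 2 % p < p := Nat.mod_lt _ hppos
    have hrk : k.val ^ 2 % p < p := Nat.mod_lt _ hppos
    have hrl : l.val ^ 2 % p < p := Nat.mod_lt _ hppos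
    have heq2 : 2 * p * (i.val + j.val) + (i.val ^ 2 % p + j.val ^ 2 % p)
        = 2 * p * (k.val + l.val) + (k.val ^ 2 % p + l.val ^ 2 % p) := by
      simp only [Nat.mul_add] at *
      linarith
    obtain ⟨hsumN, hrN⟩ := div_mod_unique' (by omega) (by omega) (by omega) heq2
    -- move to ZMod p
    set a : ZMod p := (i.val : ZMod p) with ha
    set b : ZMod p := (j.val : ZMod p) with hb
    set c : ZMod p := (k.val : ZMod p) with hc
    set d : ZMod p := (l.val : ZMod p) with hd
    have hsum : a + b = c + d := by
      have := congrArg (Nat.cast : ℕ → ZMod p) hsumN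
      push_cast at this
      exact this
    have hsq : a ^ 2 + b ^ 2 = c ^ 2 + d ^ 2 := by
      have := congrArg (Nat.cast : ℕ → ZMod p) hrN
      push_cast [ZMod.natCast_mod] at this
      exact this
    have h2ne : (2 : ZMod p) ≠ 0 := by
      have : ((2 : ℕ) : ZMod p) ≠ 0 := by
        rw [Ne, ZMod.natCast_eq_zero_iff]
        intro hdvd
        have := Nat.le_of_dvd (by norm_num) hdvd
        omega
      simpa using this
    have key : a * b = c * d := by
      apply mul_left_cancel₀ h2ne
      linear_combination (a + b + c + d) * hsum - hsq
    have hfac : (a - c) * (a - d) = 0 := by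
      linear_combination a * hsum - key
    have inj : ∀ x y : Fin n, (x.val : ZMod p) = (y.val : ZMod p) → x = y := by
      intro x y hxy
      apply Fin.ext
      have hx := ZMod.val_cast_of_lt (show x.val < p by omega)
      have hy := ZMod.val_cast_of_lt (show y.val < p by omega)
      rw [← hx, hxy, hy]
    rcases mul_eq_zero.mp hfac with h | h
    · have hik : i = k := inj i k (by rwa [← sub_eq_zero])
      have : j = l := by
        apply Fin.ext
        have : i.val = k.val := by rw [hik]
        omega
      exact ⟨hik, this⟩
    · have hil : i = l := inj i l (by rwa [← sub_eq_zero])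
      have hv : i.val = l.val := by rw [hil]
      have hij' : i.val ≤ j.val := hij
      have hkl' : k.val ≤ l.val := hkl
      have h1 : i.val = k.val := by omega
      have h2 : j.val = l.val := by omega
      exact ⟨Fin.ext h1, Fin.ext h2⟩
end
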